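/- Let L ≥ 2 be an integer, let r be an integer with 2 ≤ r ≤ L, let p ∈ [0,1] be real, and set m = L − r. Then ∑_{v=0}^{m+1} binom(m+1, v) p^{v}(1−p)^{m+1−v} · v/(v+r−1) − ∑_{v=0}^{m} binom(m, v) p^{v}(1−p)^{m−v} · v/(v+r) = p · ∑_{v=0}^{m} binom(m, v) p^{v}(1−p)^{m−v} · 1/(v+r) + (1−p) · ∑_{v=0}^{m} binom(m, v) p^{v}(1−p)^{m−v} · v/((v+r−1)(v+r)). -/

import Mathlib

lemma aux16 (m r : ℕ) (p : ℝ) :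
    (∑ v ∈ Finset.range (m + 2),
        ((m + 1).choose v : ℝ) * p ^ v * (1 - p) ^ (m + 1 - v) *
          ((v : ℝ) / ((v : ℝ) + (r : ℝ) - 1)))
    = ∑ v ∈ Finset.range (m + 1),
        (m.choose v : ℝ) * p ^ v * (1 - p) ^ (m - v) *
          (p * ((v : ℝ) + 1) / ((v : ℝ) + (r : ℝ))
            + (1 - p) * ((v : ℝ) / ((v : ℝ) + (r : ℝ) - 1))) := by
  rw [Finset.sum_range_succ']
  simp only [Nat.cast_zero, zero_div, mul_zero, add_zero]
  have pascal : ∀ i ∈ Finset.range (m + 1),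
      ((m + 1).choose (i + 1) : ℝ) * p ^ (i + 1) * (1 - p) ^ (m + 1 - (i + 1)) *
        (((i + 1 : ℕ) : ℝ) / (((i + 1 : ℕ) : ℝ) + (r : ℝ) - 1))
      = (m.choose i : ℝ) * p ^ i * (1 - p) ^ (m - i) *
          (p * ((i : ℝ) + 1) / ((i : ℝ) + (r : ℝ)))
        + (m.choose (i + 1) : ℝ) * p ^ (i + 1) * (1 - p) ^ (m - i) *
          (((i : ℝ) + 1) / ((i : ℝ) + (r : ℝ))) := by
    intro i hi
    have h1 : (m + 1).choose (i + 1) = m.choose i + m.choose (i + 1) :=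
      Nat.choose_succ_succ m i
    have h2 : m + 1 - (i + 1) = m - i := by omega
    rw [h1, h2]
    push_cast
    ring
  rw [Finset.sum_congr rfl pascal, Finset.sum_add_distrib]
  set G : ℕ → ℝ := fun v =>
    (m.choose v : ℝ) * p ^ v * (1 - p) ^ (m + 1 - v) * ((v : ℝ) / ((v : ℝ) + (r : ℝ) - 1))
    with hG
  have hB : ∑ i ∈ Finset.range (m + 1),
      (m.choose (i + 1) : ℝ) * p ^ (i + 1) * (1 - p) ^ (m - i) *
        (((i : ℝ) + 1) / ((i : ℝ) + (r : ℝ)))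
      = ∑ v ∈ Finset.range (m + 1),
          (m.choose v : ℝ) * p ^ v * (1 - p) ^ (m - v) *
            ((1 - p) * ((v : ℝ) / ((v : ℝ) + (r : ℝ) - 1))) := by
    have step1 : ∑ i ∈ Finset.range (m + 1),
        (m.choose (i + 1) : ℝ) * p ^ (i + 1) * (1 - p) ^ (m - i) *
          (((i : ℝ) + 1) / ((i : ℝ) + (r : ℝ)))
        = ∑ i ∈ Finset.range (m + 1), G (i + 1) := by
      refine Finset.sum_congr rfl fun i hi => ?_
      have h2 : m + 1 - (i + 1) = m - i := by omega
      simp only [hG, h2]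
      push_cast
      ring
    rw [step1]
    have step2 : ∑ v ∈ Finset.range (m + 2), G v
        = ∑ i ∈ Finset.range (m + 1), G (i + 1) + G 0 :=
      Finset.sum_range_succ' G (m + 1)
    have hG0 : G 0 = 0 := by simp [hG]
    have hGtop : G (m + 1) = 0 := by
      simp [hG, Nat.choose_succ_self]
    have step3 : ∑ v ∈ Finset.range (m + 2), G v
        = ∑ v ∈ Finset.range (m + 1), G v := by
      rw [Finset.sum_range_succ, hGtop, add_zero]
    have : ∑ i ∈ Finset.range (m + 1), G (i + 1)
        = ∑ v ∈ Finset.range (m + 1), G v := by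
      rw [← step3, step2, hG0, add_zero]
    rw [this]
    refine Finset.sum_congr rfl fun v hv => ?_
    have hv' : v ≤ m := by simpa [Nat.lt_succ_iff] using hv
    have h3 : m + 1 - v = (m - v) + 1 := by omega
    simp only [hG, h3, pow_succ]
    ring
  rw [hB, ← Finset.sum_add_distrib]
  refine Finset.sum_congr rfl fun v hv => ?_
  ring


/-- The decomposition of `κ(r-1) - κ(r)` used in the `r ≥ 2` case of the
discrete convexity proof in Appendix F:
`E[(V+B)/(V+B+r-1)] - E[V/(V+r)] = p·E[1/(V+r)] + (1-p)·E[V/((V+r-1)(V+r))]`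
for `V ∼ Binomial(m, p)` with `m = L - r` and `B ∼ Bernoulli(p)` independent,
written out as sums over the binomial distributions. -/
theorem stmt_16 (L r : ℕ) (hL : 2 ≤ L) (hr2 : 2 ≤ r) (hrL : r ≤ L)
    (p : ℝ) (hp0 : 0 ≤ p) (hp1 : p ≤ 1)
    (m : ℕ) (hm : m = L - r) :
    (∑ v ∈ Finset.range (m + 2),
        ((m + 1).choose v : ℝ) * p ^ v * (1 - p) ^ (m + 1 - v) *
          ((v : ℝ) / ((v : ℝ) + (r : ℝ) - 1)))
      - (∑ v ∈ Finset.range (m + 1),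
          (m.choose v : ℝ) * p ^ v * (1 - p) ^ (m - v) *
            ((v : ℝ) / ((v : ℝ) + (r : ℝ))))
    = p * (∑ v ∈ Finset.range (m + 1),
          (m.choose v : ℝ) * p ^ v * (1 - p) ^ (m - v) *
            (1 / ((v : ℝ) + (r : ℝ))))
      + (1 - p) * (∑ v ∈ Finset.range (m + 1),
          (m.choose v : ℝ) * p ^ v * (1 - p) ^ (m - v) *
            ((v : ℝ) / (((v : ℝ) + (r : ℝ) - 1) * ((v : ℝ) + (r : ℝ))))) := by
  rw [aux16, Finset.mul_sum, Finset.mul_sum, ← Finset.sum_sub_distrib,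
    ← Finset.sum_add_distrib]
  refine Finset.sum_congr rfl fun v hv => ?_
  have hr : (2 : ℝ) ≤ (r : ℝ) := by exact_mod_cast hr2
  have hv0 : (0 : ℝ) ≤ (v : ℝ) := Nat.cast_nonneg v
  have h1 : (v : ℝ) + (r : ℝ) ≠ 0 := by nlinarith
  have h2 : (v : ℝ) + (r : ℝ) - 1 ≠ 0 := by nlinarith
  field_simp
  ring
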